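/- Let $G$ be a subset of the left half-plane $H_{Re}(-\infty,0)=\{w\in\mathbb{C} : \mathrm{Re}(w)<0\}$. Then $e^w\to 0$ as $w\to\infty$ (i.e., as $|w|\to\infty$) with $w\in G$ if and only if for every $p\in(-\infty,0)$ the set $G\cap\{w : p<\mathrm{Re}(w)<0\}$ is bounded. -/

import Mathlib

open Set Metric Filter

/-- For `G` contained in the left half-plane, `e^w → 0` as `|w| → ∞` with
`w ∈ G` if and only if for every `p < 0` the set `G ∩ {w | p < Re w < 0}` is bounded. -/
theorem exp_tendsto_zero_iff_strips_bounded
    (G : Set ℂ) (hG : G ⊆ {w : ℂ | w.re < 0}) :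
    (∀ ε > (0:ℝ), ∃ M > (0:ℝ), ∀ w ∈ G, M < ‖w‖ → ‖Complex.exp w‖ < ε) ↔
      ∀ p : ℝ, p < 0 →
        Bornology.IsBounded (G ∩ {w : ℂ | p < w.re ∧ w.re < 0}) := by
  constructor
  · intro h p hp
    obtain ⟨M, hM, hMw⟩ := h (Real.exp p) (Real.exp_pos p)
    refine (isBounded_closedBall (x := (0:ℂ)) (r := M)).subset ?_
    rintro w ⟨hwG, hwp, _⟩
    simp only [mem_closedBall, dist_zero_right]
    by_contra hc
    push_neg at hc
    have := hMw w hwG hc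
    rw [Complex.norm_exp] at this
    exact absurd (Real.exp_lt_exp.mp this) (not_lt.mpr hwp.le)
  · intro h ε hε
    set ε' := min ε 1 / 2 with hε'
    have hε'pos : 0 < ε' := by positivity
    have hε'lt1 : ε' < 1 := by
      have : min ε 1 ≤ 1 := min_le_right _ _
      linarith
    have hε'le : ε' < ε := by
      have : min ε 1 ≤ ε := min_le_left _ _
      linarith
    have hp : Real.log ε' < 0 := Real.log_neg hε'pos hε'lt1
    obtain ⟨R, hR⟩ := (h (Real.log ε') hp).subset_closedBall 0
    refine ⟨max R 1, lt_of_lt_of_le one_pos (le_max_right _ _), ?_⟩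
    intro w hwG hMw
    rw [Complex.norm_exp]
    have hre : w.re ≤ Real.log ε' := by
      by_contra hc
      push_neg at hc
      have : w ∈ closedBall (0:ℂ) R := hR ⟨hwG, hc, hG hwG⟩
      rw [mem_closedBall, dist_zero_right] at this
      exact absurd this (not_le.mpr (lt_of_le_of_lt (le_max_left R 1) hMw))
    calc Real.exp w.re ≤ Real.exp (Real.log ε') := Real.exp_le_exp.mpr hre
      _ = ε' := Real.exp_log hε'pos
      _ < ε := hε'le
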